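/- arXiv:0806.0169 — 6 statements merged into one kernel-verified Lean document; each statement's English description precedes it below -/
import Mathlib

section
/- For every positive integer n, the sum of k! for k from 1 to n is at most 3·(n+1)·(n+1)!/(n² + 3n + 5). -/
theorem stmt_4 (n : ℕ) (hn : 1 ≤ n) :
    ∑ k ∈ Finset.Icc 1 n, (Nat.factorial k : ℝ)
      ≤ 3 * (n + 1) * (Nat.factorial (n + 1) : ℝ) / (n ^ 2 + 3 * n + 5) := by
  induction n, hn using Nat.le_induction with
  | base => simp [Nat.factorial]; norm_num
  | succ n hn ih =>
    rw [Finset.sum_Icc_succ_top (by omega)]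
    have hF : (0:ℝ) < (Nat.factorial (n + 1) : ℝ) := by positivity
    have hx : (n:ℝ) ≥ 1 := by exact_mod_cast hn
    have hd1 : (0:ℝ) < (n:ℝ) ^ 2 + 3 * n + 5 := by positivity
    have hd2 : (0:ℝ) < ((n:ℝ) + 1) ^ 2 + 3 * ((n:ℝ) + 1) + 5 := by positivity
    have hfac : (Nat.factorial (n + 2) : ℝ) = ((n:ℝ) + 2) * (Nat.factorial (n + 1) : ℝ) := by
      rw [Nat.factorial_succ]; push_cast; ring
    have key : 3 * ((n:ℝ) + 1) * (Nat.factorial (n + 1) : ℝ) / ((n:ℝ) ^ 2 + 3 * n + 5)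
        + (Nat.factorial (n + 1) : ℝ)
        ≤ 3 * ((n:ℝ) + 1 + 1) * (Nat.factorial (n + 2) : ℝ)
          / (((n:ℝ) + 1) ^ 2 + 3 * ((n:ℝ) + 1) + 5) := by
      rw [hfac, div_add' _ _ _ (ne_of_gt hd1), div_le_div_iff₀ hd1 hd2]
      nlinarith [mul_nonneg hF.le (sq_nonneg ((n:ℝ) - 1)), sq_nonneg ((n:ℝ)-1),
        mul_nonneg (mul_nonneg hF.le (sub_nonneg.2 hx)) (sq_nonneg (n:ℝ)),
        mul_nonneg (mul_nonneg hF.le (sub_nonneg.2 hx)) (le_of_lt hF),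
        mul_nonneg hF.le (sub_nonneg.2 hx)]
    calc ∑ k ∈ Finset.Icc 1 n, (Nat.factorial k : ℝ) + (Nat.factorial (n + 1) : ℝ)
        ≤ 3 * ((n:ℝ) + 1) * (Nat.factorial (n + 1) : ℝ) / ((n:ℝ) ^ 2 + 3 * n + 5)
          + (Nat.factorial (n + 1) : ℝ) := by linarith [ih]
      _ ≤ _ := by push_cast; convert key using 2 <;> push_cast <;> ring
end

section
/- For every positive integer n, the sum of 1/k! for k from 1 to n is at least n²·(n+1)/(2·((n+1)! - 1)). -/
lemma fact_sum_le (n : ℕ) : ∑ k ∈ Finset.Icc 1 n, Nat.factorial k ≤ n * Nat.factorial n := by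
  calc ∑ k ∈ Finset.Icc 1 n, Nat.factorial k
      ≤ ∑ k ∈ Finset.Icc 1 n, Nat.factorial n := by
        apply Finset.sum_le_sum
        intro k hk
        exact Nat.factorial_le (Finset.mem_Icc.mp hk).2
    _ = n * Nat.factorial n := by
        rw [Finset.sum_const, Nat.card_Icc]; simp [Nat.smul_one_eq_cast]

lemma key (n : ℕ) (hn : 1 ≤ n) :
    (n + 1) * ∑ k ∈ Finset.Icc 1 n, Nat.factorial k ≤ 2 * (Nat.factorial (n + 1) - 1) := by
  induction n with
  | zero => omega
  | succ m ih =>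
    rcases Nat.eq_or_lt_of_le hn with h | h
    · have hm0 : m = 0 := by omega
      subst hm0
      decide
    · have hm : 1 ≤ m := by omega
      have ih' := ih hm
      rw [Finset.sum_Icc_succ_top (by omega : 1 ≤ m + 1)]
      have hS := fact_sum_le m
      have h1 : Nat.factorial m ≤ Nat.factorial (m+1) := Nat.factorial_le (by omega)
      have h2 : Nat.factorial (m+2) = (m+2) * Nat.factorial (m+1) := rfl
      have h3 : Nat.factorial (m+1) = (m+1) * Nat.factorial m := rfl
      have h4 : 1 ≤ Nat.factorial (m+1) := Nat.one_le_iff_ne_zero.mpr (Nat.factorial_ne_zero _)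
      -- (m+2)*(S + (m+1)!) ≤ 2*((m+2)!-1)
      have hSm : ∑ k ∈ Finset.Icc 1 m, Nat.factorial k ≤ m * Nat.factorial m := hS
      -- goal: (m+1+1) * (S + (m+1)!) ≤ 2*((m+2)! - 1)
      have expand : (m + 1 + 1) * (∑ k ∈ Finset.Icc 1 m, Nat.factorial k + Nat.factorial (m+1))
          = (m+1) * ∑ k ∈ Finset.Icc 1 m, Nat.factorial k
            + ∑ k ∈ Finset.Icc 1 m, Nat.factorial k + (m+2) * Nat.factorial (m+1) := by ring
      have hmm : m * Nat.factorial m ≤ Nat.factorial (m+1) := by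
        rw [h3]; nlinarith [Nat.factorial_pos m]
      calc (m + 1 + 1) * (∑ k ∈ Finset.Icc 1 m, Nat.factorial k + Nat.factorial (m+1))
          ≤ 2 * (Nat.factorial (m+1) - 1) + Nat.factorial (m+1) + (m+2) * Nat.factorial (m+1) := by
            rw [expand]; gcongr; exact hSm.trans hmm
        _ ≤ 2 * (Nat.factorial (m+1+1) - 1) := by
            rw [h2]
            have h5 : 3 * Nat.factorial (m+1) ≤ (m+2) * Nat.factorial (m+1) :=
              Nat.mul_le_mul_right _ (by omega)
            generalize (m+2) * Nat.factorial (m+1) = A at h5 ⊢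
            omega

theorem stmt_5 (n : ℕ) (hn : 1 ≤ n) :
    ∑ k ∈ Finset.Icc 1 n, (1 : ℝ) / Nat.factorial k
      ≥ n ^ 2 * (n + 1) / (2 * ((Nat.factorial (n + 1) : ℝ) - 1)) := by
  set S : ℝ := ∑ k ∈ Finset.Icc 1 n, (Nat.factorial k : ℝ) with hSdef
  have hSpos : 0 < S := by
    apply Finset.sum_pos
    · intro k _; exact_mod_cast Nat.factorial_pos k
    · exact ⟨1, Finset.mem_Icc.mpr ⟨le_refl 1, hn⟩⟩
  have hfact2 : (2 : ℕ) ≤ Nat.factorial (n + 1) := by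
    calc (2:ℕ) = Nat.factorial 2 := rfl
    _ ≤ Nat.factorial (n+1) := Nat.factorial_le (by omega)
  have hDpos : (0 : ℝ) < 2 * ((Nat.factorial (n + 1) : ℝ) - 1) := by
    have : (2:ℝ) ≤ (Nat.factorial (n+1) : ℝ) := by exact_mod_cast hfact2
    linarith
  -- Cauchy–Schwarz / Sedrakyan
  have cs : (n : ℝ) ^ 2 / S ≤ ∑ k ∈ Finset.Icc 1 n, (1 : ℝ) / Nat.factorial k := by
    have := Finset.sq_sum_div_le_sum_sq_div (Finset.Icc 1 n) (fun _ => (1:ℝ))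
      (g := fun k => (Nat.factorial k : ℝ))
      (fun k _ => by positivity)
    simpa [Nat.card_Icc, one_pow] using this
  -- bound on S
  have hkey : ((n : ℝ) + 1) * S ≤ 2 * ((Nat.factorial (n + 1) : ℝ) - 1) := by
    have h := key n hn
    have hcast : (((n + 1) * ∑ k ∈ Finset.Icc 1 n, Nat.factorial k : ℕ) : ℝ)
        ≤ ((2 * (Nat.factorial (n + 1) - 1) : ℕ) : ℝ) := by exact_mod_cast h
    push_cast [Nat.cast_sub (by omega : 1 ≤ Nat.factorial (n+1))] at hcast
    convert hcast using 2
  refine le_trans ?_ cs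
  rw [div_le_div_iff₀ hDpos hSpos]
  have hn2 : (0:ℝ) ≤ (n:ℝ)^2 := sq_nonneg _
  nlinarith [hkey, hn2, hSpos]
end

section
/- For every positive integer n, the sum of 1/k! for k from 1 to n is at least n²·(n² + 3n + 5)/(3·(n+1)·(n+1)!). -/
theorem stmt_6 (n : ℕ) (hn : 1 ≤ n) :
    ∑ k ∈ Finset.Icc 1 n, (1 : ℝ) / Nat.factorial k
      ≥ n ^ 2 * (n ^ 2 + 3 * n + 5) / (3 * (n + 1) * (Nat.factorial (n + 1) : ℝ)) := by
  induction n, hn using Nat.le_induction with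
  | base => norm_num [Finset.Icc_self]
  | succ n hn ih =>
    rw [Finset.sum_Icc_succ_top (by omega : 1 ≤ n + 1)]
    have hF : (0 : ℝ) < (Nat.factorial (n + 1) : ℝ) := by
      exact_mod_cast Nat.factorial_pos _
    have hfac : (Nat.factorial (n + 2) : ℝ) = (n + 2) * Nat.factorial (n + 1) := by
      rw [Nat.factorial_succ]; push_cast; ring
    have hn1 : (1 : ℝ) ≤ (n : ℝ) := by exact_mod_cast hn
    set F := (Nat.factorial (n + 1) : ℝ) with hFdef
    have key : ((n : ℝ) + 1) ^ 2 * (((n : ℝ) + 1) ^ 2 + 3 * ((n : ℝ) + 1) + 5) /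
        (3 * ((n : ℝ) + 1 + 1) * ((n + 2) * F))
        ≤ (n : ℝ) ^ 2 * ((n : ℝ) ^ 2 + 3 * n + 5) / (3 * ((n : ℝ) + 1) * F) + 1 / F := by
      rw [div_add_div _ _ (by positivity) (by positivity), div_le_div_iff₀ (by positivity) (by positivity)]
      have poly : (0:ℝ) ≤ (n:ℝ)^6 + 6*(n:ℝ)^5 + 13*(n:ℝ)^4 + 8*(n:ℝ)^3 - 8*(n:ℝ)^2 - 8*(n:ℝ) + 3 := by
        nlinarith [sq_nonneg ((n:ℝ)), sq_nonneg ((n:ℝ)^2), sq_nonneg ((n:ℝ)^3), sq_nonneg ((n:ℝ)-1)]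
      nlinarith [sq_nonneg F, mul_pos hF hF, mul_nonneg (mul_nonneg hF.le hF.le) poly]
    rw [ge_iff_le]
    push_cast
    calc (((n:ℝ)+1)^2 * (((n:ℝ)+1)^2 + 3*((n:ℝ)+1) + 5)) / (3*((n:ℝ)+1+1) * (Nat.factorial (n+2) : ℝ))
        = ((n:ℝ)+1)^2 * (((n:ℝ)+1)^2 + 3*((n:ℝ)+1) + 5) / (3*((n:ℝ)+1+1) * ((n+2)*F)) := by
          rw [hfac]
      _ ≤ (n:ℝ)^2 * ((n:ℝ)^2 + 3*n + 5) / (3*((n:ℝ)+1)*F) + 1/F := key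
      _ ≤ (∑ k ∈ Finset.Icc 1 n, (1:ℝ)/Nat.factorial k) + 1/F := by
          linarith [ih]
end

section
/- For every positive integer n, the sum of (k² + 2k + 2)/(k·(k+1)·(k+2)!) for k from 1 to n equals 1/2 - 1/((n+1)·(n+2)!). -/
theorem stmt_11 (n : ℕ) (hn : 1 ≤ n) :
    ∑ k ∈ Finset.Icc 1 n,
        ((k : ℝ) ^ 2 + 2 * k + 2) / (k * (k + 1) * Nat.factorial (k + 2))
      = 1 / 2 - 1 / ((n + 1) * (Nat.factorial (n + 2) : ℝ)) := by
  induction n with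
  | zero => omega
  | succ m ih =>
    rcases Nat.eq_or_lt_of_le hn with h | h
    · simp [← h]
      norm_num [Nat.factorial]
    · have hm : 1 ≤ m := by omega
      rw [Finset.sum_Icc_succ_top (by omega : 1 ≤ m + 1), ih hm]
      have hf : (0 : ℝ) < Nat.factorial (m + 2) := by positivity
      have hfs : (Nat.factorial (m + 1 + 2) : ℝ) = (m + 3) * Nat.factorial (m + 2) := by
        push_cast [Nat.factorial_succ]; ring
      have hm1 : (0 : ℝ) < (m : ℝ) + 1 := by positivity
      rw [hfs]
      push_cast
      field_simp
      ring
end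

section
/- For every positive integer n, the sum of 1/(4k⁴ + 1) for k from 1 to n is at least n/(2n² + 2n + 1). -/
theorem stmt_14 (n : ℕ) (hn : 1 ≤ n) :
    ∑ k ∈ Finset.Icc 1 n, (1 : ℝ) / (4 * k ^ 4 + 1)
      ≥ n / (2 * (n : ℝ) ^ 2 + 2 * n + 1) := by
  induction n, hn using Nat.le_induction with
  | base => norm_num
  | succ n hn ih =>
    rw [Finset.sum_Icc_succ_top (by omega : 1 ≤ n + 1)]
    have h1 : (0:ℝ) < 2 * (n:ℝ)^2 + 2*n + 1 := by positivity
    have h2 : (0:ℝ) < 4 * ((n:ℝ)+1)^4 + 1 := by positivity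
    have h3 : (0:ℝ) < 2 * ((n:ℝ)+1)^2 + 2*((n:ℝ)+1) + 1 := by positivity
    have key : (n:ℝ) / (2 * (n:ℝ)^2 + 2*n + 1) + 1 / (4 * ((n:ℝ)+1)^4 + 1)
        ≥ ((n:ℝ)+1) / (2 * ((n:ℝ)+1)^2 + 2*((n:ℝ)+1) + 1) := by
      rw [ge_iff_le, div_add_div _ _ (ne_of_gt h1) (ne_of_gt h2), div_le_div_iff₀ h3 (by positivity)]
      nlinarith [sq_nonneg ((n:ℝ)), sq_nonneg ((n:ℝ)+1), h1.le, h2.le, h3.le]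
    push_cast
    calc ((n:ℝ)+1) / (2 * ((n:ℝ)+1)^2 + 2*((n:ℝ)+1) + 1)
        ≤ (n:ℝ) / (2 * (n:ℝ)^2 + 2*n + 1) + 1 / (4 * ((n:ℝ)+1)^4 + 1) := key
      _ ≤ _ := by push_cast at ih ⊢; linarith [ih]
end

section
/- For every positive integer n, the sum of 1/(4k⁴ - 1) for k from 1 to n is at least 3n/(2n+1)². -/
theorem stmt_17 (n : ℕ) (hn : 1 ≤ n) :
    ∑ k ∈ Finset.Icc 1 n, (1 : ℝ) / (4 * k ^ 4 - 1)
      ≥ 3 * n / (2 * (n : ℝ) + 1) ^ 2 := by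
  have hn' : (1:ℝ) ≤ n := by exact_mod_cast hn
  have hmem : 1 ∈ Finset.Icc 1 n := Finset.mem_Icc.mpr ⟨le_refl 1, hn⟩
  have h1 : ∀ k ∈ Finset.Icc 1 n, (0:ℝ) ≤ 1 / (4 * (k:ℝ) ^ 4 - 1) := by
    intro k hk
    have hk1 : (1:ℝ) ≤ k := by exact_mod_cast (Finset.mem_Icc.mp hk).1
    have h3 : (3:ℝ) ≤ 4 * (k:ℝ) ^ 4 - 1 := by nlinarith [pow_le_pow_left₀ zero_le_one hk1 4]
    positivity
  have hsum : (1:ℝ)/3 ≤ ∑ k ∈ Finset.Icc 1 n, (1 : ℝ) / (4 * k ^ 4 - 1) := by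
    have := Finset.single_le_sum h1 hmem
    norm_num at this
    simpa using this
  have hbound : 3 * (n:ℝ) / (2 * (n : ℝ) + 1) ^ 2 ≤ 1/3 := by
    rw [div_le_div_iff₀ (by positivity) (by norm_num)]
    nlinarith
  linarith
end
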